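/- The support of any optimal plan γ for the Kantorovich problem with continuous cost c and compactly supported marginals μ⁺, μ⁻ is c-monotone: for all (x₀,y₀), (x₁,y₁) in spt(γ), c(x₀,y₀) + c(x₁,y₁) ≤ c(x₀,y₁) + c(x₁,y₀). -/

import Mathlib

open MeasureTheory

/-- The support of a measure: the smallest closed set of full measure, described
pointwise as the set of points all of whose neighbourhoods have positive measure. -/
def measureSupport {α : Type*} [TopologicalSpace α] [MeasurableSpace α]
    (γ : Measure α) : Set α :=
  {p | ∀ U : Set α, IsOpen U → p ∈ U → γ U ≠ 0}

section Helpers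
open Set
open MeasureTheory Set

lemma rect_nbhd {X Y : Type*} [TopologicalSpace X] [TopologicalSpace Y]
    {c : X × Y → ℝ} (hc : Continuous c) (x : X) (y : Y) {δ : ℝ} (hδ : 0 < δ) :
    ∃ U V, IsOpen U ∧ IsOpen V ∧ x ∈ U ∧ y ∈ V ∧
      ∀ a ∈ U, ∀ b ∈ V, |c (a, b) - c (x, y)| < δ := by
  have hW : IsOpen {z : X × Y | |c z - c (x, y)| < δ} := by
    have : Continuous fun z => |c z - c (x, y)| := (hc.sub continuous_const).abs
    exact isOpen_lt this continuous_const
  have hxy : (x, y) ∈ {z : X × Y | |c z - c (x, y)| < δ} := by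
    simp [hδ]
  obtain ⟨U, V, hU, hV, hxU, hyV, hsub⟩ := isOpen_prod_iff.1 hW x y hxy
  exact ⟨U, V, hU, hV, hxU, hyV, fun a ha b hb => hsub (mk_mem_prod ha hb)⟩

lemma prod_null_outside {X Y : Type*} [MeasurableSpace X] [MeasurableSpace Y]
    {μ : Measure X} {ν : Measure Y} [SFinite ν] {A : Set X} {B : Set Y}
    (hA : μ Aᶜ = 0) (hB : ν Bᶜ = 0) : (μ.prod ν) (A ×ˢ B)ᶜ = 0 := by
  have hsub : (A ×ˢ B)ᶜ ⊆ (Aᶜ ×ˢ univ) ∪ (univ ×ˢ Bᶜ) := by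
    intro z hz
    simp only [mem_compl_iff, mem_prod, not_and_or] at hz
    rcases hz with h | h
    · exact Or.inl ⟨h, trivial⟩
    · exact Or.inr ⟨trivial, h⟩
  refine le_antisymm ?_ (zero_le)
  calc (μ.prod ν) (A ×ˢ B)ᶜ ≤ (μ.prod ν) (Aᶜ ×ˢ univ) + (μ.prod ν) (univ ×ˢ Bᶜ) :=
        (measure_mono hsub).trans (measure_union_le _ _)
    _ = 0 := by rw [Measure.prod_prod, Measure.prod_prod, hA, hB]; simp

lemma integrable_of_null_compl {X : Type*} [MeasurableSpace X] [TopologicalSpace X]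
    [OpensMeasurableSpace X]
    {ν : Measure X} [IsFiniteMeasure ν] {S : Set X} (hS : IsCompact S) (hν : ν Sᶜ = 0)
    {c : X → ℝ} (hc : Continuous c) : Integrable c ν := by
  obtain ⟨C, hC⟩ := hS.exists_bound_of_continuousOn hc.continuousOn
  have hae : ∀ᵐ z ∂ν, ‖c z‖ ≤ C := by
    have : ∀ᵐ z ∂ν, z ∈ S := mem_ae_iff.2 hν
    filter_upwards [this] with z hz using hC z hz
  exact (integrable_const C).mono' hc.aestronglyMeasurable hae

lemma integral_le_of_null_compl {X : Type*} [MeasurableSpace X]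
    {ν : Measure X} [IsFiniteMeasure ν] {S : Set X} (hν : ν Sᶜ = 0)
    {c : X → ℝ} (hint : Integrable c ν) {M : ℝ} (hM : ∀ z ∈ S, c z ≤ M) :
    ∫ z, c z ∂ν ≤ (ν univ).toReal * M := by
  have hae : ∀ᵐ z ∂ν, c z ≤ M := by
    have : ∀ᵐ z ∂ν, z ∈ S := mem_ae_iff.2 hν
    filter_upwards [this] with z hz using hM z hz
  calc ∫ z, c z ∂ν ≤ ∫ _, M ∂ν := integral_mono_ae hint (integrable_const M) hae
    _ = (ν univ).toReal * M := by simp [mul_comm, measureReal_def]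

lemma integral_ge_of_null_compl {X : Type*} [MeasurableSpace X]
    {ν : Measure X} [IsFiniteMeasure ν] {S : Set X} (hν : ν Sᶜ = 0)
    {c : X → ℝ} (hint : Integrable c ν) {M : ℝ} (hM : ∀ z ∈ S, M ≤ c z) :
    (ν univ).toReal * M ≤ ∫ z, c z ∂ν := by
  have hae : ∀ᵐ z ∂ν, M ≤ c z := by
    have : ∀ᵐ z ∂ν, z ∈ S := mem_ae_iff.2 hν
    filter_upwards [this] with z hz using hM z hz
  calc (ν univ).toReal * M = ∫ _, M ∂ν := by simp [mul_comm, measureReal_def]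
    _ ≤ ∫ z, c z ∂ν := integral_mono_ae (integrable_const M) hint hae
end Helpers

theorem optimal_plan_support_cmonotone (n : ℕ)
    (c : EuclideanSpace ℝ (Fin n) × EuclideanSpace ℝ (Fin n) → ℝ)
    (hc : Continuous c)
    (μp μm : Measure (EuclideanSpace ℝ (Fin n)))
    [IsProbabilityMeasure μp] [IsProbabilityMeasure μm]
    (hμp : ∃ K, IsCompact K ∧ μp Kᶜ = 0)
    (hμm : ∃ K, IsCompact K ∧ μm Kᶜ = 0)
    (γ : Measure (EuclideanSpace ℝ (Fin n) × EuclideanSpace ℝ (Fin n)))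
    [IsProbabilityMeasure γ]
    (hγ1 : γ.map Prod.fst = μp) (hγ2 : γ.map Prod.snd = μm)
    (hopt : ∀ γ' : Measure (EuclideanSpace ℝ (Fin n) × EuclideanSpace ℝ (Fin n)),
      IsProbabilityMeasure γ' → γ'.map Prod.fst = μp → γ'.map Prod.snd = μm →
      ∫ p, c p ∂γ ≤ ∫ p, c p ∂γ') :
    ∀ p ∈ measureSupport γ, ∀ q ∈ measureSupport γ,
      c p + c q ≤ c (p.1, q.2) + c (q.1, p.2) := by
  rintro ⟨x₀, y₀⟩ hp ⟨x₁, y₁⟩ hq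
  by_contra hlt
  push_neg at hlt
  dsimp only at hlt
  obtain ⟨Kp, hKp, hKp0⟩ := hμp
  obtain ⟨Km, hKm, hKm0⟩ := hμm
  -- the gap
  set ε : ℝ := c (x₀, y₀) + c (x₁, y₁) - c (x₀, y₁) - c (x₁, y₀) with hε
  have hεpos : 0 < ε := by dsimp [ε]; linarith
  set δ : ℝ := ε / 5 with hδdef
  have hδ : 0 < δ := by positivity
  -- the points are distinct
  have hne : x₀ ≠ x₁ ∨ y₀ ≠ y₁ := by
    by_contra h
    push_neg at h
    obtain ⟨h1, h2⟩ := h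
    rw [h1, h2] at hlt
    linarith
  -- find good rectangles
  obtain ⟨U₀, V₀, hU₀, hV₀, hxU₀, hyV₀, h00⟩ := rect_nbhd hc x₀ y₀ hδ
  obtain ⟨U₀', V₁', hU₀', hV₁', hxU₀', hyV₁', h01⟩ := rect_nbhd hc x₀ y₁ hδ
  obtain ⟨U₁', V₀', hU₁', hV₀', hxU₁', hyV₀', h10⟩ := rect_nbhd hc x₁ y₀ hδ
  obtain ⟨U₁, V₁, hU₁, hV₁, hxU₁, hyV₁, h11⟩ := rect_nbhd hc x₁ y₁ hδ
  have key : ∃ S₀ T₀ S₁ T₁ : Set (EuclideanSpace ℝ (Fin n)), IsOpen S₀ ∧ IsOpen T₀ ∧ IsOpen S₁ ∧ IsOpen T₁ ∧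
      x₀ ∈ S₀ ∧ y₀ ∈ T₀ ∧ x₁ ∈ S₁ ∧ y₁ ∈ T₁ ∧
      Disjoint (S₀ ×ˢ T₀) (S₁ ×ˢ T₁) ∧
      (∀ a ∈ S₀, ∀ b ∈ T₀, |c (a, b) - c (x₀, y₀)| < δ) ∧
      (∀ a ∈ S₀, ∀ b ∈ T₁, |c (a, b) - c (x₀, y₁)| < δ) ∧
      (∀ a ∈ S₁, ∀ b ∈ T₀, |c (a, b) - c (x₁, y₀)| < δ) ∧
      (∀ a ∈ S₁, ∀ b ∈ T₁, |c (a, b) - c (x₁, y₁)| < δ) := by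
    rcases hne with hx | hy
    · obtain ⟨W₀, W₁, hW₀, hW₁, hxW₀, hxW₁, hWdisj⟩ := t2_separation hx
      refine ⟨U₀ ∩ U₀' ∩ W₀, V₀ ∩ V₀', U₁ ∩ U₁' ∩ W₁, V₁ ∩ V₁',
        ((hU₀.inter hU₀').inter hW₀), hV₀.inter hV₀', ((hU₁.inter hU₁').inter hW₁),
        hV₁.inter hV₁', ⟨⟨hxU₀, hxU₀'⟩, hxW₀⟩, ⟨hyV₀, hyV₀'⟩, ⟨⟨hxU₁, hxU₁'⟩, hxW₁⟩,
        ⟨hyV₁, hyV₁'⟩, ?_, ?_, ?_, ?_, ?_⟩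
      · rw [Set.disjoint_left]
        rintro z ⟨hz1, _⟩ ⟨hz1', _⟩
        exact Set.disjoint_left.1 hWdisj hz1.2 hz1'.2
      · exact fun a ha b hb => h00 a ha.1.1 b hb.1
      · exact fun a ha b hb => h01 a ha.1.2 b hb.2
      · exact fun a ha b hb => h10 a ha.1.2 b hb.2
      · exact fun a ha b hb => h11 a ha.1.1 b hb.1
    · obtain ⟨W₀, W₁, hW₀, hW₁, hyW₀, hyW₁, hWdisj⟩ := t2_separation hy
      refine ⟨U₀ ∩ U₀', V₀ ∩ V₀' ∩ W₀, U₁ ∩ U₁', V₁ ∩ V₁' ∩ W₁,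
        hU₀.inter hU₀', (hV₀.inter hV₀').inter hW₀, hU₁.inter hU₁',
        (hV₁.inter hV₁').inter hW₁, ⟨hxU₀, hxU₀'⟩, ⟨⟨hyV₀, hyV₀'⟩, hyW₀⟩,
        ⟨hxU₁, hxU₁'⟩, ⟨⟨hyV₁, hyV₁'⟩, hyW₁⟩, ?_, ?_, ?_, ?_, ?_⟩
      · rw [Set.disjoint_left]
        rintro z ⟨_, hz2⟩ ⟨_, hz2'⟩
        exact Set.disjoint_left.1 hWdisj hz2.2 hz2'.2
      · exact fun a ha b hb => h00 a ha.1 b hb.1.1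
      · exact fun a ha b hb => h01 a ha.2 b hb.1.2
      · exact fun a ha b hb => h10 a ha.2 b hb.1.2
      · exact fun a ha b hb => h11 a ha.1 b hb.1.1
  obtain ⟨S₀, T₀, S₁, T₁, hS₀, hT₀, hS₁, hT₁, hxS₀, hyT₀, hxS₁, hyT₁, hdisj,
    hb00, hb01, hb10, hb11⟩ := key
  set A₀ : Set (EuclideanSpace ℝ (Fin n) × EuclideanSpace ℝ (Fin n)) := S₀ ×ˢ T₀ with hA₀def
  set A₁ : Set (EuclideanSpace ℝ (Fin n) × EuclideanSpace ℝ (Fin n)) := S₁ ×ˢ T₁ with hA₁def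
  have hA₀open : IsOpen A₀ := hS₀.prod hT₀
  have hA₁open : IsOpen A₁ := hS₁.prod hT₁
  have hA₀m : MeasurableSet A₀ := hA₀open.measurableSet
  have hA₁m : MeasurableSet A₁ := hA₁open.measurableSet
  set a₀ : ENNReal := γ A₀ with ha₀def
  set a₁ : ENNReal := γ A₁ with ha₁def
  have ha₀0 : a₀ ≠ 0 := hp A₀ hA₀open (Set.mk_mem_prod hxS₀ hyT₀)
  have ha₁0 : a₁ ≠ 0 := hq A₁ hA₁open (Set.mk_mem_prod hxS₁ hyT₁)
  have ha₀top : a₀ ≠ ⊤ := (measure_lt_top γ A₀).ne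
  have ha₁top : a₁ ≠ ⊤ := (measure_lt_top γ A₁).ne
  set m : ENNReal := min a₀ a₁ with hmdef
  have hm0 : m ≠ 0 := by
    have : 0 < m := lt_min (pos_iff_ne_zero.2 ha₀0) (pos_iff_ne_zero.2 ha₁0)
    exact this.ne'
  have hmtop : m ≠ ⊤ := ne_top_of_le_ne_top ha₀top (min_le_left _ _)
  set σ₀ : Measure (EuclideanSpace ℝ (Fin n) × EuclideanSpace ℝ (Fin n)) := (m / a₀) • γ.restrict A₀ with hσ₀def
  set σ₁ : Measure (EuclideanSpace ℝ (Fin n) × EuclideanSpace ℝ (Fin n)) := (m / a₁) • γ.restrict A₁ with hσ₁def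
  have hσ₀r : σ₀ ≤ γ.restrict A₀ := by
    refine Measure.le_iff.2 fun s _ => ?_
    rw [hσ₀def, Measure.smul_apply, smul_eq_mul]
    calc (m / a₀) * γ.restrict A₀ s ≤ 1 * γ.restrict A₀ s := by
          gcongr
          exact le_trans (ENNReal.div_le_div_right (min_le_left _ _) _) ENNReal.div_self_le_one
      _ = γ.restrict A₀ s := one_mul _
  have hσ₁r : σ₁ ≤ γ.restrict A₁ := by
    refine Measure.le_iff.2 fun s _ => ?_
    rw [hσ₁def, Measure.smul_apply, smul_eq_mul]
    calc (m / a₁) * γ.restrict A₁ s ≤ 1 * γ.restrict A₁ s := by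
          gcongr
          exact le_trans (ENNReal.div_le_div_right (min_le_right _ _) _) ENNReal.div_self_le_one
      _ = γ.restrict A₁ s := one_mul _
  have hσle : σ₀ + σ₁ ≤ γ := by
    calc σ₀ + σ₁ ≤ γ.restrict A₀ + γ.restrict A₁ := add_le_add hσ₀r hσ₁r
      _ = γ.restrict (A₀ ∪ A₁) := (Measure.restrict_union hdisj hA₁m).symm
      _ ≤ γ := Measure.restrict_le_self
  have hσ₀le : σ₀ ≤ γ := le_trans (Measure.le_add_right le_rfl) hσle
  have hσ₁le : σ₁ ≤ γ := le_trans (Measure.le_add_left le_rfl) hσle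
  -- masses
  have hσ₀univ : σ₀ Set.univ = m := by
    rw [hσ₀def, Measure.smul_apply, smul_eq_mul, Measure.restrict_apply_univ]
    exact ENNReal.div_mul_cancel ha₀0 ha₀top
  have hσ₁univ : σ₁ Set.univ = m := by
    rw [hσ₁def, Measure.smul_apply, smul_eq_mul, Measure.restrict_apply_univ]
    exact ENNReal.div_mul_cancel ha₁0 ha₁top
  haveI hσ₀fin : IsFiniteMeasure σ₀ := ⟨by rw [hσ₀univ]; exact hmtop.lt_top⟩
  haveI hσ₁fin : IsFiniteMeasure σ₁ := ⟨by rw [hσ₁univ]; exact hmtop.lt_top⟩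
  -- null sets of σ's
  have hσ₀A₀ : σ₀ A₀ᶜ = 0 := by
    rw [hσ₀def, Measure.smul_apply, smul_eq_mul,
      Measure.restrict_apply hA₀m.compl, Set.compl_inter_self]
    simp
  have hσ₁A₁ : σ₁ A₁ᶜ = 0 := by
    rw [hσ₁def, Measure.smul_apply, smul_eq_mul,
      Measure.restrict_apply hA₁m.compl, Set.compl_inter_self]
    simp
  -- marginals of σ's
  set α₀ : Measure (EuclideanSpace ℝ (Fin n)) := σ₀.map Prod.fst with hα₀def
  set β₀ : Measure (EuclideanSpace ℝ (Fin n)) := σ₀.map Prod.snd with hβ₀def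
  set α₁ : Measure (EuclideanSpace ℝ (Fin n)) := σ₁.map Prod.fst with hα₁def
  set β₁ : Measure (EuclideanSpace ℝ (Fin n)) := σ₁.map Prod.snd with hβ₁def
  have hα₀univ : α₀ Set.univ = m := by
    rw [hα₀def, Measure.map_apply measurable_fst MeasurableSet.univ, Set.preimage_univ, hσ₀univ]
  have hβ₀univ : β₀ Set.univ = m := by
    rw [hβ₀def, Measure.map_apply measurable_snd MeasurableSet.univ, Set.preimage_univ, hσ₀univ]
  have hα₁univ : α₁ Set.univ = m := by
    rw [hα₁def, Measure.map_apply measurable_fst MeasurableSet.univ, Set.preimage_univ, hσ₁univ]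
  have hβ₁univ : β₁ Set.univ = m := by
    rw [hβ₁def, Measure.map_apply measurable_snd MeasurableSet.univ, Set.preimage_univ, hσ₁univ]
  haveI : IsFiniteMeasure α₀ := ⟨by rw [hα₀univ]; exact hmtop.lt_top⟩
  haveI : IsFiniteMeasure β₀ := ⟨by rw [hβ₀univ]; exact hmtop.lt_top⟩
  haveI : IsFiniteMeasure α₁ := ⟨by rw [hα₁univ]; exact hmtop.lt_top⟩
  haveI : IsFiniteMeasure β₁ := ⟨by rw [hβ₁univ]; exact hmtop.lt_top⟩
  -- null sets of the marginals
  have hα₀S₀ : α₀ S₀ᶜ = 0 := by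
    rw [hα₀def, Measure.map_apply measurable_fst hS₀.measurableSet.compl]
    refine le_antisymm (le_trans (measure_mono ?_) hσ₀A₀.le) (zero_le)
    intro z hz hzA
    exact hz hzA.1
  have hβ₀T₀ : β₀ T₀ᶜ = 0 := by
    rw [hβ₀def, Measure.map_apply measurable_snd hT₀.measurableSet.compl]
    refine le_antisymm (le_trans (measure_mono ?_) hσ₀A₀.le) (zero_le)
    intro z hz hzA
    exact hz hzA.2
  have hα₁S₁ : α₁ S₁ᶜ = 0 := by
    rw [hα₁def, Measure.map_apply measurable_fst hS₁.measurableSet.compl]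
    refine le_antisymm (le_trans (measure_mono ?_) hσ₁A₁.le) (zero_le)
    intro z hz hzA
    exact hz hzA.1
  have hβ₁T₁ : β₁ T₁ᶜ = 0 := by
    rw [hβ₁def, Measure.map_apply measurable_snd hT₁.measurableSet.compl]
    refine le_antisymm (le_trans (measure_mono ?_) hσ₁A₁.le) (zero_le)
    intro z hz hzA
    exact hz hzA.2
  -- the swapped measures
  set η : Measure (EuclideanSpace ℝ (Fin n) × EuclideanSpace ℝ (Fin n)) := m⁻¹ • (α₀.prod β₁) with hηdef
  set η' : Measure (EuclideanSpace ℝ (Fin n) × EuclideanSpace ℝ (Fin n)) := m⁻¹ • (α₁.prod β₀) with hη'def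
  have hηuniv : η Set.univ = m := by
    rw [hηdef, Measure.smul_apply, smul_eq_mul, ← Set.univ_prod_univ, Measure.prod_prod,
      hα₀univ, hβ₁univ, ← mul_assoc, ENNReal.inv_mul_cancel hm0 hmtop, one_mul]
  have hη'univ : η' Set.univ = m := by
    rw [hη'def, Measure.smul_apply, smul_eq_mul, ← Set.univ_prod_univ, Measure.prod_prod,
      hα₁univ, hβ₀univ, ← mul_assoc, ENNReal.inv_mul_cancel hm0 hmtop, one_mul]
  haveI : IsFiniteMeasure η := ⟨by rw [hηuniv]; exact hmtop.lt_top⟩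
  haveI : IsFiniteMeasure η' := ⟨by rw [hη'univ]; exact hmtop.lt_top⟩
  -- marginals of η, η'
  have hηfst : η.map Prod.fst = α₀ := by
    rw [hηdef, Measure.map_smul, Measure.map_fst_prod, hβ₁univ, smul_smul,
      ENNReal.inv_mul_cancel hm0 hmtop, one_smul]
  have hηsnd : η.map Prod.snd = β₁ := by
    rw [hηdef, Measure.map_smul, Measure.map_snd_prod, hα₀univ, smul_smul,
      ENNReal.inv_mul_cancel hm0 hmtop, one_smul]
  have hη'fst : η'.map Prod.fst = α₁ := by
    rw [hη'def, Measure.map_smul, Measure.map_fst_prod, hβ₀univ, smul_smul,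
      ENNReal.inv_mul_cancel hm0 hmtop, one_smul]
  have hη'snd : η'.map Prod.snd = β₀ := by
    rw [hη'def, Measure.map_smul, Measure.map_snd_prod, hα₁univ, smul_smul,
      ENNReal.inv_mul_cancel hm0 hmtop, one_smul]
  -- the competitor
  set ρ : Measure (EuclideanSpace ℝ (Fin n) × EuclideanSpace ℝ (Fin n)) := γ - (σ₀ + σ₁) with hρdef
  have hρle : ρ ≤ γ := Measure.sub_le
  haveI : IsFiniteMeasure ρ := ⟨lt_of_le_of_lt (Measure.le_iff.1 hρle _ MeasurableSet.univ)
    (measure_lt_top γ _)⟩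
  have hcancel : ρ + (σ₀ + σ₁) = γ := Measure.sub_add_cancel_of_le hσle
  set γ' : Measure (EuclideanSpace ℝ (Fin n) × EuclideanSpace ℝ (Fin n)) := ρ + (η + η') with hγ'def
  -- marginals of γ'
  have hγ'fst : γ'.map Prod.fst = μp := by
    rw [hγ'def, Measure.map_add _ _ measurable_fst, Measure.map_add _ _ measurable_fst,
      hηfst, hη'fst, hα₀def, hα₁def, ← Measure.map_add _ _ measurable_fst,
      ← Measure.map_add _ _ measurable_fst, hcancel, hγ1]
  have hγ'snd : γ'.map Prod.snd = μm := by
    rw [hγ'def, Measure.map_add _ _ measurable_snd, Measure.map_add _ _ measurable_snd,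
      hηsnd, hη'snd, hβ₁def, hβ₀def, ← Measure.map_add _ _ measurable_snd]
    have : σ₁ + σ₀ = σ₀ + σ₁ := add_comm _ _
    rw [this, ← Measure.map_add _ _ measurable_snd, hcancel, hγ2]
  have hγ'prob : IsProbabilityMeasure γ' := by
    constructor
    have h1 : (ρ + (σ₀ + σ₁)) Set.univ = γ Set.univ := by rw [hcancel]
    rw [Measure.add_apply, Measure.add_apply, hσ₀univ, hσ₁univ,
      show γ Set.univ = 1 from measure_univ] at h1
    rw [hγ'def, Measure.add_apply, Measure.add_apply, hηuniv, hη'univ]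
    exact h1
  -- compact support set
  set K : Set (EuclideanSpace ℝ (Fin n) × EuclideanSpace ℝ (Fin n)) := Kp ×ˢ Km with hKdef
  have hKcomp : IsCompact K := hKp.prod hKm
  have hKmeas : MeasurableSet K := hKp.isClosed.measurableSet.prod hKm.isClosed.measurableSet
  have hγK : γ Kᶜ = 0 := by
    have hsub : Kᶜ ⊆ (Prod.fst ⁻¹' Kpᶜ) ∪ (Prod.snd ⁻¹' Kmᶜ) := by
      intro z hz
      simp only [hKdef, Set.mem_compl_iff, Set.mem_prod, not_and_or] at hz
      simp only [Set.mem_union, Set.mem_preimage, Set.mem_compl_iff]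
      exact hz
    have h1 : γ (Prod.fst ⁻¹' Kpᶜ) = 0 := by
      rw [← Measure.map_apply measurable_fst hKp.isClosed.measurableSet.compl, hγ1]
      exact hKp0
    have h2 : γ (Prod.snd ⁻¹' Kmᶜ) = 0 := by
      rw [← Measure.map_apply measurable_snd hKm.isClosed.measurableSet.compl, hγ2]
      exact hKm0
    refine le_antisymm ?_ (zero_le)
    calc γ Kᶜ ≤ γ (Prod.fst ⁻¹' Kpᶜ) + γ (Prod.snd ⁻¹' Kmᶜ) :=
          (measure_mono hsub).trans (measure_union_le _ _)
      _ = 0 := by rw [h1, h2, add_zero]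
  have null_of_le : ∀ ν : Measure (EuclideanSpace ℝ (Fin n) × EuclideanSpace ℝ (Fin n)),
      ν ≤ γ → ν Kᶜ = 0 := fun ν hν =>
    le_antisymm ((Measure.le_iff.1 hν _ hKmeas.compl).trans hγK.le) (zero_le)
  have hρK : ρ Kᶜ = 0 := null_of_le ρ hρle
  have hσ₀K : σ₀ Kᶜ = 0 := null_of_le σ₀ hσ₀le
  have hσ₁K : σ₁ Kᶜ = 0 := null_of_le σ₁ hσ₁le
  have hα₀K : α₀ Kpᶜ = 0 := by
    have hle : α₀ ≤ μp := by
      rw [hα₀def, ← hγ1]; exact Measure.map_mono hσ₀le measurable_fst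
    exact le_antisymm
      ((Measure.le_iff.1 hle _ hKp.isClosed.measurableSet.compl).trans hKp0.le) (zero_le)
  have hα₁K : α₁ Kpᶜ = 0 := by
    have hle : α₁ ≤ μp := by
      rw [hα₁def, ← hγ1]; exact Measure.map_mono hσ₁le measurable_fst
    exact le_antisymm
      ((Measure.le_iff.1 hle _ hKp.isClosed.measurableSet.compl).trans hKp0.le) (zero_le)
  have hβ₀K : β₀ Kmᶜ = 0 := by
    have hle : β₀ ≤ μm := by
      rw [hβ₀def, ← hγ2]; exact Measure.map_mono hσ₀le measurable_snd
    exact le_antisymm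
      ((Measure.le_iff.1 hle _ hKm.isClosed.measurableSet.compl).trans hKm0.le) (zero_le)
  have hβ₁K : β₁ Kmᶜ = 0 := by
    have hle : β₁ ≤ μm := by
      rw [hβ₁def, ← hγ2]; exact Measure.map_mono hσ₁le measurable_snd
    exact le_antisymm
      ((Measure.le_iff.1 hle _ hKm.isClosed.measurableSet.compl).trans hKm0.le) (zero_le)
  have hηK : η Kᶜ = 0 := by
    rw [hηdef, Measure.smul_apply, smul_eq_mul, hKdef, prod_null_outside hα₀K hβ₁K, mul_zero]
  have hη'K : η' Kᶜ = 0 := by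
    rw [hη'def, Measure.smul_apply, smul_eq_mul, hKdef, prod_null_outside hα₁K hβ₀K, mul_zero]
  -- integrability
  have intρ : Integrable c ρ := integrable_of_null_compl hKcomp hρK hc
  have intσ₀ : Integrable c σ₀ := integrable_of_null_compl hKcomp hσ₀K hc
  have intσ₁ : Integrable c σ₁ := integrable_of_null_compl hKcomp hσ₁K hc
  have intη : Integrable c η := integrable_of_null_compl hKcomp hηK hc
  have intη' : Integrable c η' := integrable_of_null_compl hKcomp hη'K hc
  -- localization of η, η'
  have hηS : η (S₀ ×ˢ T₁)ᶜ = 0 := by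
    rw [hηdef, Measure.smul_apply, smul_eq_mul, prod_null_outside hα₀S₀ hβ₁T₁, mul_zero]
  have hη'S : η' (S₁ ×ˢ T₀)ᶜ = 0 := by
    rw [hη'def, Measure.smul_apply, smul_eq_mul, prod_null_outside hα₁S₁ hβ₀T₀, mul_zero]
  -- bounds
  set M : ℝ := m.toReal with hMdef
  have hMpos : 0 < M := ENNReal.toReal_pos hm0 hmtop
  have bη : ∫ z, c z ∂η ≤ M * (c (x₀, y₁) + δ) := by
    have h := integral_le_of_null_compl hηS intη (M := c (x₀, y₁) + δ) ?_
    · rwa [hηuniv] at h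
    · rintro ⟨a, b⟩ ⟨ha, hb⟩
      have h' := abs_lt.1 (hb01 a ha b hb)
      linarith [h'.2]
  have bη' : ∫ z, c z ∂η' ≤ M * (c (x₁, y₀) + δ) := by
    have h := integral_le_of_null_compl hη'S intη' (M := c (x₁, y₀) + δ) ?_
    · rwa [hη'univ] at h
    · rintro ⟨a, b⟩ ⟨ha, hb⟩
      have h' := abs_lt.1 (hb10 a ha b hb)
      linarith [h'.2]
  have bσ₀ : M * (c (x₀, y₀) - δ) ≤ ∫ z, c z ∂σ₀ := by
    have h := integral_ge_of_null_compl hσ₀A₀ intσ₀ (M := c (x₀, y₀) - δ) ?_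
    · rwa [hσ₀univ] at h
    · rintro ⟨a, b⟩ ⟨ha, hb⟩
      have h' := abs_lt.1 (hb00 a ha b hb)
      linarith [h'.1]
  have bσ₁ : M * (c (x₁, y₁) - δ) ≤ ∫ z, c z ∂σ₁ := by
    have h := integral_ge_of_null_compl hσ₁A₁ intσ₁ (M := c (x₁, y₁) - δ) ?_
    · rwa [hσ₁univ] at h
    · rintro ⟨a, b⟩ ⟨ha, hb⟩
      have h' := abs_lt.1 (hb11 a ha b hb)
      linarith [h'.1]
  -- decompositions of the two costs
  have hIγ' : ∫ z, c z ∂γ' = ∫ z, c z ∂ρ + (∫ z, c z ∂η + ∫ z, c z ∂η') := by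
    rw [hγ'def, integral_add_measure intρ (intη.add_measure intη'),
      integral_add_measure intη intη']
  have hIγ : ∫ z, c z ∂γ = ∫ z, c z ∂ρ + (∫ z, c z ∂σ₀ + ∫ z, c z ∂σ₁) := by
    rw [← hcancel, integral_add_measure intρ (intσ₀.add_measure intσ₁),
      integral_add_measure intσ₀ intσ₁]
  -- conclusion
  have hfinal := hopt γ' hγ'prob hγ'fst hγ'snd
  rw [hIγ, hIγ'] at hfinal
  have hAB : (c (x₀, y₁) + δ) + (c (x₁, y₀) + δ) < (c (x₀, y₀) - δ) + (c (x₁, y₁) - δ) := by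
    rw [hδdef]
    linarith [hεpos, hε.le, hε.ge]
  have hlt2 : ∫ z, c z ∂η + ∫ z, c z ∂η' < ∫ z, c z ∂σ₀ + ∫ z, c z ∂σ₁ := by
    calc ∫ z, c z ∂η + ∫ z, c z ∂η' ≤ M * (c (x₀, y₁) + δ) + M * (c (x₁, y₀) + δ) :=
          add_le_add bη bη'
      _ < M * (c (x₀, y₀) - δ) + M * (c (x₁, y₁) - δ) := by nlinarith [hAB, hMpos]
      _ ≤ ∫ z, c z ∂σ₀ + ∫ z, c z ∂σ₁ := add_le_add bσ₀ bσ₁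
  linarith
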